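/- For integers n ≥ 1: ∑_{l=0}^{n-1} B_l(x)·B_{n-l}(x)/(n-l) = ∑_{l=1}^{n} C(n,l) (B_l/l) B_{n-l}(x) + (n/2) B_{n-1}(x) + H_n B_n(x), where H_n is the n-th harmonic number. -/

import Mathlib

open Polynomial Finset

noncomputable def integ : ℚ[X] →ₗ[ℚ] ℚ :=
  Polynomial.lsum (fun i => ((i + 1 : ℚ)⁻¹) • LinearMap.id)

lemma integ_monomial (i : ℕ) (a : ℚ) : integ (monomial i a) = a / (i + 1) := by
  simp [integ, Polynomial.lsum_apply, Polynomial.sum_monomial_index, div_eq_inv_mul]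

lemma integ_C (a : ℚ) : integ (C a) = a := by
  rw [← monomial_zero_left, integ_monomial]; norm_num

lemma integ_derivative (p : ℚ[X]) : integ (derivative p) = p.eval 1 - p.eval 0 := by
  induction p using Polynomial.induction_on' with
  | add p q hp hq => simp [hp, hq]; ring
  | monomial i a =>
    cases i with
    | zero => simp
    | succ i =>
      rw [derivative_monomial, integ_monomial]
      simp [Nat.succ_sub_one]
      field_simp

lemma bern_eval_one (k : ℕ) (hk : k ≠ 1) :
    (Polynomial.bernoulli k).eval 1 = _root_.bernoulli k := by
  rw [Polynomial.bernoulli_eval_one, bernoulli_eq_bernoulli'_of_ne_one hk]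

lemma integ_bernoulli (k : ℕ) (hk : 1 ≤ k) : integ (Polynomial.bernoulli k) = 0 := by
  have h : Polynomial.bernoulli k
      = derivative (C (((k : ℚ) + 1)⁻¹) * Polynomial.bernoulli (k + 1)) := by
    rw [derivative_C_mul, Polynomial.derivative_bernoulli (k + 1)]
    rw [Nat.add_sub_cancel, show ((k + 1 : ℕ) : ℚ[X]) = C ((k : ℚ) + 1) by simp,
      ← mul_assoc, ← C_mul, inv_mul_cancel₀ (by positivity), C_1, one_mul]
  rw [h, integ_derivative]
  simp only [eval_mul, eval_C, Polynomial.bernoulli_eval_zero,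
    bern_eval_one (k + 1) (by omega)]
  ring

lemma parts (l m : ℕ) (hm : 1 ≤ m) :
    integ (Polynomial.bernoulli (l + 1) * Polynomial.bernoulli m)
      = (if l = 0 then _root_.bernoulli (m + 1) / (m + 1) else 0)
        - ((l + 1 : ℚ) / (m + 1)) * integ (Polynomial.bernoulli l * Polynomial.bernoulli (m + 1)) := by
  have key : Polynomial.bernoulli (l + 1) * Polynomial.bernoulli m
      = derivative (Polynomial.bernoulli (l + 1) * (C (((m : ℚ) + 1)⁻¹) * Polynomial.bernoulli (m + 1)))
        - C (((l : ℚ) + 1) * ((m : ℚ) + 1)⁻¹) * (Polynomial.bernoulli l * Polynomial.bernoulli (m + 1)) := by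
    rw [derivative_mul, derivative_C_mul, Polynomial.derivative_bernoulli (l + 1),
      Polynomial.derivative_bernoulli (m + 1), Nat.add_sub_cancel, Nat.add_sub_cancel,
      show ((l + 1 : ℕ) : ℚ[X]) = C ((l : ℚ) + 1) by simp,
      show ((m + 1 : ℕ) : ℚ[X]) = C ((m : ℚ) + 1) by simp]
    rw [show C (((m : ℚ) + 1)⁻¹) * (C ((m : ℚ) + 1) * Polynomial.bernoulli m)
        = Polynomial.bernoulli m by
      rw [← mul_assoc, ← C_mul, inv_mul_cancel₀ (by positivity), C_1, one_mul]]
    rw [C_mul]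
    ring
  rw [key, map_sub, integ_derivative]
  simp only [eval_mul, eval_C, Polynomial.bernoulli_eval_zero, Polynomial.bernoulli_eval_one,
    bern_eval_one (m + 1) (by omega), map_smul, ← C_mul]
  rw [show integ (C (((l : ℚ) + 1) * ((m : ℚ) + 1)⁻¹) * (Polynomial.bernoulli l * Polynomial.bernoulli (m + 1)))
      = ((l : ℚ) + 1) * ((m : ℚ) + 1)⁻¹ * integ (Polynomial.bernoulli l * Polynomial.bernoulli (m + 1)) by
    rw [show (C (((l : ℚ) + 1) * ((m : ℚ) + 1)⁻¹) : ℚ[X]) = ((((l : ℚ) + 1) * ((m : ℚ) + 1)⁻¹) : ℚ) • (1 : ℚ[X]) by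
      rw [smul_eq_C_mul, mul_one]
    , smul_mul_assoc, one_mul, map_smul, smul_eq_mul]]
  have hb' : bernoulli' (l + 1) = _root_.bernoulli (l + 1) + if l = 0 then 1 else 0 := by
    rcases Nat.eq_zero_or_pos l with h | h
    · subst h; norm_num [bernoulli'_one, _root_.bernoulli_one]
    · rw [bernoulli_eq_bernoulli'_of_ne_one (by omega), if_neg (by omega), add_zero]
  rw [hb']
  split_ifs with h <;> field_simp <;> ring

lemma integ_mul_aux (l : ℕ) : ∀ m : ℕ, 1 ≤ m →
    integ (Polynomial.bernoulli (l + 1) * Polynomial.bernoulli m)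
      = (-1 : ℚ) ^ l * (l + 1).factorial * m.factorial / (l + 1 + m).factorial
          * _root_.bernoulli (l + 1 + m) := by
  induction l with
  | zero =>
    intro m hm
    rw [parts 0 m hm, if_pos rfl, Polynomial.bernoulli_zero, one_mul,
      integ_bernoulli (m + 1) (by omega)]
    have : ((1 + m).factorial : ℚ) = (m + 1) * m.factorial := by
      rw [Nat.add_comm 1 m, Nat.factorial_succ]; push_cast; ring
    rw [this]
    have hm' : ((m : ℚ) + 1) ≠ 0 := by positivity
    have hf : (m.factorial : ℚ) ≠ 0 := by exact_mod_cast m.factorial_ne_zero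
    field_simp
    ring_nf
  | succ l ih =>
    intro m hm
    rw [parts (l + 1) m hm, if_neg (by omega), ih (m + 1) (by omega)]
    have h1 : ((l + 1 + 1).factorial : ℚ) = (l + 2) * (l + 1).factorial := by
      rw [Nat.factorial_succ]; push_cast; ring
    have h2 : ((m + 1).factorial : ℚ) = (m + 1) * m.factorial := by
      rw [Nat.factorial_succ]; push_cast; ring
    have h3 : l + 1 + (m + 1) = l + 1 + 1 + m := by omega
    rw [h3, h1, h2]
    have hm' : ((m : ℚ) + 1) ≠ 0 := by positivity
    have hf : (((l + 1 + 1 + m).factorial : ℚ)) ≠ 0 := by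
      exact_mod_cast (l + 1 + 1 + m).factorial_ne_zero
    field_simp
    push_cast
    ring

noncomputable def Lp (n : ℕ) : ℚ[X] :=
  ∑ l ∈ Finset.range n, ((n : ℚ) - l)⁻¹ • (Polynomial.bernoulli l * Polynomial.bernoulli (n - l))

noncomputable def Rp (n : ℕ) : ℚ[X] :=
  (∑ l ∈ Finset.Icc 1 n,
      ((n.choose l : ℚ) * (_root_.bernoulli l / l)) • Polynomial.bernoulli (n - l))
    + ((n : ℚ) / 2) • Polynomial.bernoulli (n - 1)
    + (harmonic n : ℚ) • Polynomial.bernoulli n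

lemma deriv_bern (k : ℕ) :
    derivative (Polynomial.bernoulli k) = (k : ℚ) • Polynomial.bernoulli (k - 1) := by
  rw [Polynomial.derivative_bernoulli, smul_eq_C_mul, C_eq_natCast]

lemma derivative_Lp (n : ℕ) :
    derivative (Lp (n + 1)) = ((n : ℚ) + 1) • Lp n + Polynomial.bernoulli n := by
  have step : ∀ l ∈ Finset.range (n + 1),
      derivative ((((n + 1 : ℕ) : ℚ) - l)⁻¹ •
          (Polynomial.bernoulli l * Polynomial.bernoulli (n + 1 - l)))
        = ((l : ℚ) * (((n : ℚ) + 1) - l)⁻¹) •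
            (Polynomial.bernoulli (l - 1) * Polynomial.bernoulli (n + 1 - l))
          + Polynomial.bernoulli l * Polynomial.bernoulli (n - l) := by
    intro l hl
    rw [Finset.mem_range, Nat.lt_succ_iff] at hl
    have hx : ((n : ℚ) + 1) - l ≠ 0 := by
      have : (l : ℚ) ≤ n := by exact_mod_cast hl
      linarith
    have e1 : n + 1 - l - 1 = n - l := by omega
    have e2 : ((n + 1 - l : ℕ) : ℚ) = ((n : ℚ) + 1) - l := by
      rw [Nat.cast_sub (by omega)]; push_cast; ring
    rw [derivative_smul, derivative_mul, deriv_bern l, deriv_bern (n + 1 - l), e1, e2,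
      smul_mul_assoc, mul_smul_comm, smul_add, smul_smul, smul_smul, Nat.cast_add, Nat.cast_one,
      inv_mul_cancel₀ hx, one_smul, mul_comm ((((n : ℚ) + 1) - l)⁻¹) ((l : ℚ))]
  rw [Lp, derivative_sum, Finset.sum_congr rfl step, Finset.sum_add_distrib,
    Finset.sum_range_succ' _ n, Finset.sum_range_succ
      (fun l => Polynomial.bernoulli l * Polynomial.bernoulli (n - l)) n]
  have hz : ((0 : ℕ) : ℚ) * (((n : ℚ) + 1) - (0 : ℕ))⁻¹ = 0 := by norm_num
  rw [hz, zero_smul, add_zero, Nat.sub_self, Polynomial.bernoulli_zero, mul_one]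
  have key : ∀ i ∈ Finset.range n,
      (((i + 1 : ℕ) : ℚ) * (((n : ℚ) + 1) - ((i + 1 : ℕ) : ℚ))⁻¹) •
          (Polynomial.bernoulli (i + 1 - 1) * Polynomial.bernoulli (n + 1 - (i + 1)))
        = (((n : ℚ) + 1) * ((n : ℚ) - i)⁻¹) •
            (Polynomial.bernoulli i * Polynomial.bernoulli (n - i))
          - Polynomial.bernoulli i * Polynomial.bernoulli (n - i) := by
    intro i hi
    rw [Finset.mem_range] at hi
    have hx : (n : ℚ) - i ≠ 0 := by
      have : (i : ℚ) < n := by exact_mod_cast hi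
      intro h; linarith
    have e3 : i + 1 - 1 = i := by omega
    have e4 : n + 1 - (i + 1) = n - i := by omega
    have e5 : ((n : ℚ) + 1) - ((i + 1 : ℕ) : ℚ) = (n : ℚ) - i := by push_cast; ring
    rw [e3, e4, e5]
    have hs : ((i + 1 : ℕ) : ℚ) * ((n : ℚ) - i)⁻¹
        = ((n : ℚ) + 1) * ((n : ℚ) - i)⁻¹ - 1 := by
      field_simp
      push_cast
      ring
    rw [hs, sub_smul, one_smul]
  rw [Finset.sum_congr rfl key, Finset.sum_sub_distrib]
  rw [Lp, Finset.smul_sum]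
  have hsc : ∀ i ∈ Finset.range n,
      ((n : ℚ) + 1) • (((n : ℚ) - i)⁻¹ •
        (Polynomial.bernoulli i * Polynomial.bernoulli (n - i)))
      = (((n : ℚ) + 1) * ((n : ℚ) - i)⁻¹) •
          (Polynomial.bernoulli i * Polynomial.bernoulli (n - i)) := by
    intro i _; rw [smul_smul]
  rw [Finset.sum_congr rfl hsc]
  abel

lemma derivative_Rp (n : ℕ) :
    derivative (Rp (n + 1)) = ((n : ℚ) + 1) • Rp n + Polynomial.bernoulli n := by
  rw [Rp, Rp, Finset.sum_Icc_succ_top (by omega : 1 ≤ n + 1)]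
  rw [derivative_add, derivative_add, derivative_add, derivative_sum, derivative_smul,
    derivative_smul, derivative_smul, deriv_bern, deriv_bern, deriv_bern]
  have e0 : n + 1 - (n + 1) = 0 := by omega
  have e1 : n + 1 - 1 = n := by omega
  rw [e0, e1]
  have hterm : ∀ l ∈ Finset.Icc 1 n,
      derivative ((((n + 1).choose l : ℚ) * (_root_.bernoulli l / l)) •
          Polynomial.bernoulli (n + 1 - l))
        = ((n : ℚ) + 1) • (((n.choose l : ℚ) * (_root_.bernoulli l / l)) •
            Polynomial.bernoulli (n - l)) := by
    intro l hl
    rw [Finset.mem_Icc] at hl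
    have e2 : n + 1 - l - 1 = n - l := by omega
    have e3 : ((n + 1 - l : ℕ) : ℚ) = ((n : ℚ) + 1) - l := by
      rw [Nat.cast_sub (by omega)]; push_cast; ring
    rw [derivative_smul, deriv_bern, e2, e3, smul_smul, smul_smul]
    congr 1
    have hch : ((n.choose l : ℚ)) * ((n : ℚ) + 1) = (((n + 1).choose l : ℚ)) * (((n : ℚ) + 1) - l) := by
      have := Nat.choose_mul_succ_eq n l
      have hc : ((n.choose l * (n + 1) : ℕ) : ℚ) = (((n + 1).choose l * (n + 1 - l) : ℕ) : ℚ) := by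
        exact_mod_cast congrArg (Nat.cast : ℕ → ℚ) this
      push_cast [Nat.cast_sub (by omega : l ≤ n + 1)] at hc
      linarith
    have hlq : (l : ℚ) ≠ 0 := Nat.cast_ne_zero.mpr (by omega)
    field_simp
    linear_combination (-(_root_.bernoulli l)) * hch
  rw [Finset.sum_congr rfl hterm, harmonic_succ]
  rw [smul_add, smul_add, Finset.smul_sum]
  have h2 : (((n + 1 : ℕ) : ℚ) / 2) • ((n : ℚ) • Polynomial.bernoulli (n - 1))
      = ((n : ℚ) + 1) • (((n : ℚ) / 2) • Polynomial.bernoulli (n - 1)) := by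
    rw [smul_smul, smul_smul]; push_cast; ring_nf
  have h3 : ((harmonic n : ℚ) + ((n + 1 : ℕ) : ℚ)⁻¹) • (((n + 1 : ℕ) : ℚ) • Polynomial.bernoulli n)
      = ((n : ℚ) + 1) • ((harmonic n : ℚ) • Polynomial.bernoulli n) + Polynomial.bernoulli n := by
    rw [smul_smul, smul_smul, add_mul, inv_mul_cancel₀ (by positivity), add_smul, one_smul]
    push_cast; ring_nf
  rw [h2, h3]
  rw [show (((0:ℕ)):ℚ) • Polynomial.bernoulli (0 - 1) = 0 by simp, smul_zero, add_zero]
  abel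

lemma bern_odd_zero (k : ℕ) (h : Odd k) (h2 : 1 < k) : _root_.bernoulli k = 0 := by
  rw [bernoulli_eq_bernoulli'_of_ne_one (by omega), bernoulli'_eq_zero_of_odd h h2]

lemma telescope (m : ℕ) (hm : 1 ≤ m) (hodd : Odd m) :
    ∑ i ∈ Finset.range m, (-1 : ℚ) ^ i * (i + 1).factorial * (m - 1 - i).factorial
      = m.factorial := by
  set e : ℕ → ℚ := fun i => (-1 : ℚ) ^ i * (i + 1).factorial * (m - i).factorial / (m + 2)
    with he
  have hstep : ∀ i ∈ Finset.range m,
      (-1 : ℚ) ^ i * (i + 1).factorial * (m - 1 - i).factorial = e i - e (i + 1) := by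
    intro i hi
    rw [Finset.mem_range] at hi
    have h1 : m - i = (m - 1 - i) + 1 := by omega
    have h2 : m - (i + 1) = m - 1 - i := by omega
    have h3 : ((m - i : ℕ) : ℚ) = (m : ℚ) - i := by
      rw [Nat.cast_sub (by omega)]
    have hf1 : ((m - i).factorial : ℚ) = ((m : ℚ) - i) * ((m - 1 - i).factorial : ℚ) := by
      rw [h1, Nat.factorial_succ, ← h1]
      push_cast [h3]
      ring
    have hf2 : ((i + 1 + 1).factorial : ℚ) = ((i : ℚ) + 2) * ((i + 1).factorial : ℚ) := by
      rw [Nat.factorial_succ]; push_cast; ring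
    rw [he]
    simp only [h2]
    rw [hf1, hf2, pow_succ]
    have hm2 : ((m : ℚ) + 2) ≠ 0 := by positivity
    field_simp
    ring
  rw [Finset.sum_congr rfl hstep, Finset.sum_range_sub' e]
  rw [he]
  simp only [Nat.sub_self, Nat.factorial_zero, Nat.sub_zero]
  rw [Odd.neg_one_pow hodd]
  have hf : ((m + 1).factorial : ℚ) = ((m : ℚ) + 1) * (m.factorial : ℚ) := by
    rw [Nat.factorial_succ]; push_cast; ring
  rw [hf]
  have hm2 : ((m : ℚ) + 2) ≠ 0 := by positivity
  field_simp
  ring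

lemma integ_Lp (m : ℕ) (hm : 1 ≤ m) :
    integ (Lp (m + 1)) = _root_.bernoulli (m + 1) / (m + 1) := by
  rw [Lp, map_sum]
  have hterm : ∀ l ∈ Finset.range (m + 1),
      integ ((((m + 1 : ℕ) : ℚ) - l)⁻¹ •
          (Polynomial.bernoulli l * Polynomial.bernoulli (m + 1 - l)))
        = (((m + 1 : ℕ) : ℚ) - l)⁻¹
            * integ (Polynomial.bernoulli l * Polynomial.bernoulli (m + 1 - l)) := by
    intro l _; rw [map_smul, smul_eq_mul]
  rw [Finset.sum_congr rfl hterm, Finset.sum_range_succ']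
  have h0 : (((m + 1 : ℕ) : ℚ) - ((0 : ℕ) : ℚ))⁻¹
      * integ (Polynomial.bernoulli 0 * Polynomial.bernoulli (m + 1 - 0)) = 0 := by
    rw [Polynomial.bernoulli_zero, one_mul, integ_bernoulli (m + 1 - 0) (by omega), mul_zero]
  rw [h0, add_zero]
  have hterm2 : ∀ i ∈ Finset.range m,
      (((m + 1 : ℕ) : ℚ) - ((i + 1 : ℕ) : ℚ))⁻¹
          * integ (Polynomial.bernoulli (i + 1) * Polynomial.bernoulli (m + 1 - (i + 1)))
        = ((-1 : ℚ) ^ i * (i + 1).factorial * (m - 1 - i).factorial)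
            * (_root_.bernoulli (m + 1) / ((m + 1).factorial : ℚ)) := by
    intro i hi
    rw [Finset.mem_range] at hi
    have e4 : m + 1 - (i + 1) = m - i := by omega
    rw [e4, integ_mul_aux i (m - i) (by omega)]
    have e5 : i + 1 + (m - i) = m + 1 := by omega
    rw [e5]
    have h3 : ((m - i : ℕ) : ℚ) = (m : ℚ) - i := by rw [Nat.cast_sub (by omega)]
    have hf1 : ((m - i).factorial : ℚ) = ((m : ℚ) - i) * ((m - 1 - i).factorial : ℚ) := by
      rw [show m - i = (m - 1 - i) + 1 by omega, Nat.factorial_succ]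
      push_cast [show m - 1 - i + 1 = m - i by omega, h3]
      ring
    have e6 : (((m + 1 : ℕ) : ℚ) - ((i + 1 : ℕ) : ℚ)) = (m : ℚ) - i := by push_cast; ring
    rw [e6, hf1]
    have hx : (m : ℚ) - i ≠ 0 := by
      have : (i : ℚ) < m := by exact_mod_cast hi
      intro h; linarith
    have hfac : (((m + 1).factorial : ℚ)) ≠ 0 := by exact_mod_cast (m + 1).factorial_ne_zero
    field_simp
  rw [Finset.sum_congr rfl hterm2, ← Finset.sum_mul]
  rcases Nat.even_or_odd m with he | ho
  · have hodd : Odd (m + 1) := Even.add_one he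
    have hb : _root_.bernoulli (m + 1) = 0 := bern_odd_zero (m + 1) hodd (by omega)
    rw [hb]
    simp
  · rw [telescope m hm ho]
    have hf : ((m + 1).factorial : ℚ) = ((m : ℚ) + 1) * (m.factorial : ℚ) := by
      rw [Nat.factorial_succ]; push_cast; ring
    have hfac : ((m.factorial : ℚ)) ≠ 0 := by exact_mod_cast m.factorial_ne_zero
    rw [hf]
    push_cast
    field_simp

lemma integ_Rp (m : ℕ) (hm : 1 ≤ m) :
    integ (Rp (m + 1)) = _root_.bernoulli (m + 1) / (m + 1) := by
  rw [Rp, map_add, map_add, map_sum, Finset.sum_Icc_succ_top (by omega : 1 ≤ m + 1)]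
  have hz1 : ∀ l ∈ Finset.Icc 1 m,
      integ ((((m + 1).choose l : ℚ) * (_root_.bernoulli l / l)) •
        Polynomial.bernoulli (m + 1 - l)) = 0 := by
    intro l hl
    rw [Finset.mem_Icc] at hl
    rw [map_smul, integ_bernoulli (m + 1 - l) (by omega), smul_zero]
  rw [Finset.sum_congr rfl hz1, Finset.sum_const_zero, zero_add]
  rw [map_smul, map_smul, map_smul, Nat.sub_self,
    integ_bernoulli (m + 1) (by omega), integ_bernoulli (m + 1 - 1) (by omega),
    Polynomial.bernoulli_zero]
  rw [show integ (1 : ℚ[X]) = 1 by rw [← C_1, integ_C]]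
  simp [Nat.choose_self]

lemma main_ident : ∀ n : ℕ, 1 ≤ n → Lp n = Rp n := by
  intro n
  induction n with
  | zero => omega
  | succ n ih =>
    intro _
    rcases Nat.eq_zero_or_pos n with rfl | hn'
    · -- base case : Lp 1 = Rp 1
      have hL : Lp 1 = Polynomial.bernoulli 1 := by
        rw [Lp]
        simp
      have hR : Rp 1 = Polynomial.bernoulli 1 := by
        rw [Rp]
        rw [Finset.Icc_self, Finset.sum_singleton]
        norm_num [_root_.bernoulli_one, harmonic_succ]
      rw [hL, hR]
    · have ih' := ih hn'
      have hd : derivative (Lp (n + 1) - Rp (n + 1)) = 0 := by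
        rw [derivative_sub, derivative_Lp, derivative_Rp, ih']
        ring
      have hC := Polynomial.eq_C_of_derivative_eq_zero hd
      have hi : integ (Lp (n + 1) - Rp (n + 1)) = 0 := by
        rw [map_sub, integ_Lp n hn', integ_Rp n hn', sub_self]
      rw [hC, integ_C] at hi
      rw [← sub_eq_zero, hC, hi, map_zero]

theorem miki_poly_asymmetric (n : ℕ) (hn : 1 ≤ n) (x : ℚ) :
    ∑ l ∈ Finset.range n,
        (Polynomial.bernoulli l).eval x * ((Polynomial.bernoulli (n - l)).eval x / ((n : ℚ) - l))
      = (∑ l ∈ Finset.Icc 1 n,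
          (n.choose l : ℚ) * (_root_.bernoulli l / l) * (Polynomial.bernoulli (n - l)).eval x)
        + ((n : ℚ) / 2) * (Polynomial.bernoulli (n - 1)).eval x
        + harmonic n * (Polynomial.bernoulli n).eval x := by
  have hLR := main_ident n hn
  have h1 : ∑ l ∈ Finset.range n,
      (Polynomial.bernoulli l).eval x * ((Polynomial.bernoulli (n - l)).eval x / ((n : ℚ) - l))
      = (Lp n).eval x := by
    rw [Lp, eval_finset_sum]
    refine Finset.sum_congr rfl fun l _ => ?_
    rw [eval_smul, eval_mul, smul_eq_mul, div_eq_inv_mul]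
    ring
  have h2 : (Rp n).eval x
      = (∑ l ∈ Finset.Icc 1 n,
          (n.choose l : ℚ) * (_root_.bernoulli l / l) * (Polynomial.bernoulli (n - l)).eval x)
        + ((n : ℚ) / 2) * (Polynomial.bernoulli (n - 1)).eval x
        + harmonic n * (Polynomial.bernoulli n).eval x := by
    rw [Rp, eval_add, eval_add, eval_finset_sum, eval_smul, eval_smul,
      smul_eq_mul, smul_eq_mul]
    congr 1
    congr 1
    refine Finset.sum_congr rfl fun l _ => ?_
    rw [eval_smul, smul_eq_mul]
  rw [h1, hLR, h2]
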